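/- Let n ≥ 2 and let K_{n,n} be the metric space on points a₁,…,aₙ,b₁,…,bₙ with d(aᵢ,aⱼ) = d(bᵢ,bⱼ) = 2 for i ≠ j and d(aᵢ,bⱼ) = 1 for all i,j. Then for q ≥ 0, the generalized roundness inequality Σ_{i<j}(d(aᵢ,aⱼ)^q + d(bᵢ,bⱼ)^q) ≤ Σ_{i,j} d(aᵢ,bⱼ)^q holds if and only if q ≤ log₂(1 + 1/(n−1)). -/

import Mathlib

noncomputable section

/-- For the metric space `K_{n,n}` (distance 2 within each part, distance 1 across parts),
the generalized roundness-`q` inequality holds iff `q ≤ log₂(1 + 1/(n-1))`. -/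
theorem stmt2 (n : ℕ) (hn : 2 ≤ n) (q : ℝ) (hq : 0 ≤ q)
    (d : (Fin n ⊕ Fin n) → (Fin n ⊕ Fin n) → ℝ)
    (hda : ∀ i j : Fin n, i ≠ j → d (Sum.inl i) (Sum.inl j) = 2)
    (hdb : ∀ i j : Fin n, i ≠ j → d (Sum.inr i) (Sum.inr j) = 2)
    (hdab : ∀ i j : Fin n, d (Sum.inl i) (Sum.inr j) = 1) :
    ((∑ i : Fin n, ∑ j : Fin n, if i < j then
        d (Sum.inl i) (Sum.inl j) ^ q + d (Sum.inr i) (Sum.inr j) ^ q else 0) ≤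
      ∑ i : Fin n, ∑ j : Fin n, d (Sum.inl i) (Sum.inr j) ^ q) ↔
    q ≤ Real.logb 2 (1 + 1 / ((n : ℝ) - 1)) := by
  have hn1 : (1:ℝ) ≤ (n:ℝ) - 1 := by
    have : (2:ℝ) ≤ n := by exact_mod_cast hn
    linarith
  have hn1' : (0:ℝ) < (n:ℝ) - 1 := by linarith
  have hnpos : (0:ℝ) < n := by linarith
  -- count of pairs i < j
  have hS : (∑ i : Fin n, ∑ j : Fin n, if i < j then (1:ℝ) else 0)
      = ((n:ℝ)^2 - n) / 2 := by
    have tri : ∀ i j : Fin n,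
        (if i < j then (1:ℝ) else 0) + (if j < i then (1:ℝ) else 0)
          + (if i = j then (1:ℝ) else 0) = 1 := by
      intro i j
      rcases lt_trichotomy i j with h | h | h
      · simp [h, h.ne, h.ne', not_lt_of_gt h]
      · simp [h]
      · simp [h, h.ne, h.ne', not_lt_of_gt h]
    have hsum : (∑ i : Fin n, ∑ j : Fin n,
        ((if i < j then (1:ℝ) else 0) + (if j < i then (1:ℝ) else 0)
          + (if i = j then (1:ℝ) else 0))) = (n:ℝ)^2 := by
      simp only [tri]
      simp [Finset.sum_const, Finset.card_univ]
      ring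
    have hcomm : (∑ i : Fin n, ∑ j : Fin n, if j < i then (1:ℝ) else 0)
        = ∑ i : Fin n, ∑ j : Fin n, if i < j then (1:ℝ) else 0 := by
      rw [Finset.sum_comm]
    have hdiag : (∑ i : Fin n, ∑ j : Fin n, if i = j then (1:ℝ) else 0) = n := by
      simp
    simp only [Finset.sum_add_distrib] at hsum
    rw [hcomm, hdiag] at hsum
    linarith
  have h2q : (0:ℝ) < (2:ℝ) ^ q := Real.rpow_pos_of_pos (by norm_num) q
  have hLHS : (∑ i : Fin n, ∑ j : Fin n, if i < j then
        d (Sum.inl i) (Sum.inl j) ^ q + d (Sum.inr i) (Sum.inr j) ^ q else 0)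
      = ((n:ℝ)^2 - n) * (2:ℝ) ^ q := by
    have : ∀ i j : Fin n, (if i < j then
        d (Sum.inl i) (Sum.inl j) ^ q + d (Sum.inr i) (Sum.inr j) ^ q else 0)
        = (2 * (2:ℝ)^q) * (if i < j then (1:ℝ) else 0) := by
      intro i j
      by_cases h : i < j
      · simp [h, hda i j h.ne, hdb i j h.ne]; ring
      · simp [h]
    simp only [this, ← Finset.mul_sum, hS]
    ring
  have hRHS : (∑ i : Fin n, ∑ j : Fin n, d (Sum.inl i) (Sum.inr j) ^ q)
      = (n:ℝ)^2 := by
    simp [hdab, Finset.sum_const, Finset.card_univ]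
    ring
  rw [hLHS, hRHS]
  have hx : 1 + 1 / ((n:ℝ) - 1) = (n:ℝ) / ((n:ℝ) - 1) := by
    field_simp
    ring
  rw [hx, Real.le_logb_iff_rpow_le (by norm_num) (by positivity)]
  rw [le_div_iff₀ hn1']
  constructor
  · intro h; nlinarith
  · intro h; nlinarith
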